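/- Let (R, m) be a Noetherian local ring, I an ideal of R containing a non-zerodivisor, and x, y ∈ I a regular sequence on R such that J = (x, y) is a reduction of I with I^{n+1} = J·I^n for all n ≥ r. Then for every m ≥ r one has ~(I^{m+1}) = J·~(I^m). In particular the Ratliff-Rush reduction number of I with respect to J is at most the reduction number r_J(I). -/

import Mathlib

/-- The Ratliff-Rush closure of the power `I^n`:  `⋃_{k≥0} (I^{n+k} : I^k)`. -/
noncomputable def rrPow {R : Type*} [CommRing R] (I : Ideal R) (n : ℕ) : Ideal R :=
  ⨆ k : ℕ, (I ^ (n + k)).colon ((I ^ k : Ideal R) : Set R)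


section Aux

variable {R : Type*} [CommRing R]

lemma mem_colon_pow_iff {I : Ideal R} {n k : ℕ} {a : R} :
    a ∈ (I ^ (n + k)).colon ((I ^ k : Ideal R) : Set R) ↔ ∀ v ∈ I ^ k, a * v ∈ I ^ (n + k) := by
  simp [Submodule.mem_colon, smul_eq_mul]

lemma colon_pow_mono (I : Ideal R) (n : ℕ) :
    Monotone fun k => (I ^ (n + k)).colon ((I ^ k : Ideal R) : Set R) := by
  apply monotone_nat_of_le_succ
  intro k a ha
  rw [mem_colon_pow_iff] at ha ⊢
  intro v hv
  rw [pow_succ] at hv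
  refine Submodule.mul_induction_on hv (fun p hp q hq => ?_) (fun p q hp hq => ?_)
  · rw [show a * (p * q) = a * p * q by ring, show n + (k+1) = (n+k)+1 from rfl, pow_succ]
    exact Ideal.mul_mem_mul (ha p hp) hq
  · rw [mul_add]; exact add_mem hp hq

lemma mem_rrPow_iff {I : Ideal R} {n : ℕ} {a : R} :
    a ∈ rrPow I n ↔ ∃ k, ∀ v ∈ I ^ k, a * v ∈ I ^ (n + k) := by
  rw [rrPow, Submodule.mem_iSup_of_directed _ (colon_pow_mono I n).directed_le]
  simp only [mem_colon_pow_iff]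

lemma pow_le_rrPow (I : Ideal R) (n : ℕ) : I ^ n ≤ rrPow I n := by
  intro a ha
  exact mem_rrPow_iff.2 ⟨0, fun v _ => Ideal.mul_mem_right v _ ha⟩

lemma monomial_mem_span_pair_pow (x y : R) {i j n : ℕ} (h : i + j = n) :
    x ^ i * y ^ j ∈ Ideal.span {x, y} ^ n := by
  subst h
  rw [pow_add]
  exact Ideal.mul_mem_mul (Ideal.pow_mem_pow (Ideal.subset_span (by simp)) i)
    (Ideal.pow_mem_pow (Ideal.subset_span (by simp)) j)

lemma span_pair_pow_le (x y : R) (n : ℕ) :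
    Ideal.span {x, y} ^ n ≤ Ideal.span {p : R | ∃ i ≤ n, p = x ^ i * y ^ (n - i)} := by
  induction n with
  | zero =>
    rw [pow_zero, Ideal.one_eq_top, top_le_iff, Ideal.eq_top_iff_one]
    exact Ideal.subset_span ⟨0, le_refl 0, by simp⟩
  | succ n ih =>
    rw [pow_succ]
    refine Ideal.mul_le.2 (fun p hp q hq => ?_)
    have hp' := ih hp
    obtain ⟨u, v, rfl⟩ := Ideal.mem_span_pair.1 hq
    rw [mul_add, show p * (u * x) = u * (p * x) by ring, show p * (v * y) = v * (p * y) by ring]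
    have key : p * x ∈ Ideal.span {p : R | ∃ i ≤ n + 1, p = x ^ i * y ^ (n + 1 - i)} ∧
        p * y ∈ Ideal.span {p : R | ∃ i ≤ n + 1, p = x ^ i * y ^ (n + 1 - i)} := by
      clear hp
      induction hp' using Submodule.span_induction with
      | mem w hw =>
        obtain ⟨i, hi, rfl⟩ := hw
        constructor
        · refine Ideal.subset_span ⟨i + 1, by omega, ?_⟩
          rw [show n + 1 - (i + 1) = n - i by omega, pow_succ]; ring
        · refine Ideal.subset_span ⟨i, by omega, ?_⟩
          rw [show n + 1 - i = (n - i) + 1 by omega, pow_succ]; ring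
      | zero => simp
      | add w₁ w₂ _ _ h1 h2 =>
        exact ⟨by rw [add_mul]; exact add_mem h1.1 h2.1,
               by rw [add_mul]; exact add_mem h1.2 h2.2⟩
      | smul c w _ h1 =>
        exact ⟨by rw [smul_eq_mul, mul_assoc]; exact Ideal.mul_mem_left _ _ h1.1,
               by rw [smul_eq_mul, mul_assoc]; exact Ideal.mul_mem_left _ _ h1.2⟩
    exact add_mem (Ideal.mul_mem_left _ _ key.1) (Ideal.mul_mem_left _ _ key.2)

lemma span_pair_pow_succ_le (x y : R) (s : ℕ) :
    Ideal.span {x, y} ^ (s + 1) ≤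
      Ideal.span {y ^ (s + 1)} ⊔ Ideal.span {x} * Ideal.span {x, y} ^ s := by
  refine (span_pair_pow_le x y (s + 1)).trans (Ideal.span_le.2 ?_)
  rintro p ⟨i, hi, rfl⟩
  cases i with
  | zero =>
    exact Submodule.mem_sup_left (Ideal.subset_span (by simp))
  | succ j =>
    refine Submodule.mem_sup_right ?_
    rw [show s + 1 - (j + 1) = s - j by omega, pow_succ,
      show x ^ j * x * y ^ (s - j) = x * (x ^ j * y ^ (s - j)) by ring]
    exact Ideal.mul_mem_mul (Ideal.mem_span_singleton_self x)
      (monomial_mem_span_pair_pow x y (by omega))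

end Aux

/-- Let `(R,m)` be Noetherian local, `I` a regular ideal, and `x, y ∈ I` a regular
sequence on `R` such that `J = (x,y)` is a reduction of `I` with `I^{n+1} = JI^n` for all
`n ≥ r`.  Then `~(I^{m+1}) = J·~(I^m)` for all `m ≥ r`; in particular the Ratliff-Rush
reduction number of `I` with respect to `J` is at most `r_J(I)`. -/
theorem stmt_8 (R : Type*) [CommRing R] [IsNoetherianRing R] [IsLocalRing R]
    (I : Ideal R) (hreg : ∃ z ∈ I, z ∈ nonZeroDivisors R)
    (x y : R) (hxI : x ∈ I) (hyI : y ∈ I)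
    (hx : x ∈ nonZeroDivisors R)
    (hy : ∀ z : R, y * z ∈ Ideal.span {x} → z ∈ Ideal.span {x})
    (J : Ideal R) (hJ : J = Ideal.span {x, y})
    (r : ℕ) (hred : ∀ n : ℕ, r ≤ n → I ^ (n + 1) = J * I ^ n) :
    ∀ m : ℕ, r ≤ m → rrPow I (m + 1) = J * rrPow I m := by
  intro m hm
  have hJI : J ≤ I := by
    rw [hJ, Ideal.span_le]
    intro z hz
    rcases hz with rfl | hz
    · exact hxI
    · rcases hz with rfl; exact hyI
  have hxI1 : x ∈ I ^ 1 := by rwa [pow_one]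
  have hyI1 : y ∈ I ^ 1 := by rwa [pow_one]
  have hmul : ∀ {p q w : ℕ} {u v : R}, u ∈ I ^ p → v ∈ I ^ q → p + q = w → u * v ∈ I ^ w := by
    intro p q w u v hu hv hw
    subst hw
    rw [pow_add]
    exact Ideal.mul_mem_mul hu hv
  have hmono : ∀ i j : ℕ, x ^ i * y ^ j ∈ I ^ (i + j) := fun i j =>
    hmul (Ideal.pow_mem_pow hxI i) (Ideal.pow_mem_pow hyI j) rfl
  have hA : ∀ w, r ≤ w → ∀ s, I ^ (w + s) = J ^ s * I ^ w := by
    intro w hw s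
    induction s with
    | zero => simp
    | succ s ih =>
      rw [show w + (s + 1) = (w + s) + 1 from rfl, hred _ (by omega), ih, pow_succ]
      ring
  have hy' : ∀ (s : ℕ) (z : R), y ^ s * z ∈ Ideal.span {x} → z ∈ Ideal.span {x} := by
    intro s
    induction s with
    | zero => intro z hz; simpa using hz
    | succ s ih =>
      intro z hz
      refine ih z (hy _ ?_)
      rwa [show y * (y ^ s * z) = y ^ (s + 1) * z by ring]
  have hcancel : ∀ u v : R, x * u = x * v → u = v := by
    intro u v h
    have h0 : (u - v) * x = 0 := by linear_combination h
    have := mem_nonZeroDivisors_iff_right.1 hx _ h0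
    exact sub_eq_zero.1 this
  have hB : ∀ (z : R) (s : ℕ), z * x ^ (s + 1) ∈ I ^ (m + (s + 1)) →
      z * y ^ (s + 1) ∈ I ^ (m + (s + 1)) → z ∈ rrPow I m := by
    intro z s hzx hzy
    have hgen : ∀ q ∈ (Ideal.span {x, y} : Ideal R) ^ (2 * s + 1),
        z * q ∈ I ^ (m + (2 * s + 1)) := by
      intro q hq
      have hq' := span_pair_pow_le x y (2 * s + 1) hq
      clear hq
      induction hq' using Submodule.span_induction with
      | mem w hw =>
        obtain ⟨i, hi, rfl⟩ := hw
        rcases le_or_gt (s + 1) i with h | h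
        · obtain ⟨j, rfl⟩ : ∃ j, i = (s + 1) + j := ⟨i - (s + 1), by omega⟩
          obtain ⟨j2, hj2⟩ : ∃ j2, j + j2 = s := ⟨s - j, by omega⟩
          rw [show 2 * s + 1 - ((s + 1) + j) = j2 by omega,
            show z * (x ^ ((s + 1) + j) * y ^ j2) = z * x ^ (s + 1) * (x ^ j * y ^ j2) by
              rw [pow_add]; ring]
          exact hmul hzx (hmono j j2) (by omega)
        · obtain ⟨j, hj⟩ : ∃ j, i + j = s := ⟨s - i, by omega⟩
          rw [show 2 * s + 1 - i = (s + 1) + j by omega,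
            show z * (x ^ i * y ^ ((s + 1) + j)) = z * y ^ (s + 1) * (x ^ i * y ^ j) by
              rw [pow_add]; ring]
          exact hmul hzy (hmono i j) (by omega)
      | zero => simp
      | add w₁ w₂ _ _ h1 h2 => rw [mul_add]; exact add_mem h1 h2
      | smul c w _ h1 =>
        rw [smul_eq_mul, show z * (c * w) = c * (z * w) by ring]
        exact Ideal.mul_mem_left _ _ h1
    refine mem_rrPow_iff.2 ⟨2 * s + 1 + r, fun v hv => ?_⟩
    have hIv : I ^ (2 * s + 1 + r) = Ideal.span {x, y} ^ (2 * s + 1) * I ^ r := by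
      rw [show 2 * s + 1 + r = r + (2 * s + 1) by omega, hA r le_rfl, hJ]
    rw [hIv] at hv
    have h2 : I ^ (m + (2 * s + 1)) * I ^ r = I ^ (m + (2 * s + 1 + r)) := by
      rw [← pow_add]; congr 1; omega
    rw [← h2]
    refine Submodule.mul_induction_on hv (fun p hp q hq => ?_) (fun p q hp hq => ?_)
    · rw [show z * (p * q) = z * p * q by ring]
      exact Ideal.mul_mem_mul (hgen p hp) hq
    · rw [mul_add]; exact add_mem hp hq
  have hdecomp : ∀ (s1 : ℕ) (U : R), U ∈ I ^ (m + (s1 + 1)) →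
      ∃ c U', c ∈ I ^ m ∧ U' ∈ I ^ (m + s1) ∧ U = y ^ (s1 + 1) * c + x * U' := by
    intro s1 U hU
    rw [hA m hm (s1 + 1), hJ] at hU
    have hU2 := Ideal.mul_mono_left (span_pair_pow_succ_le x y s1) hU
    rw [Submodule.sup_mul, mul_assoc] at hU2
    obtain ⟨q, hq, p, hp, hqp⟩ := Submodule.mem_sup.1 hU2
    obtain ⟨c, hc, hq'⟩ := Ideal.mem_span_singleton_mul.1 hq
    obtain ⟨U', hU', hp'⟩ := Ideal.mem_span_singleton_mul.1 hp
    rw [← hJ] at hU'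
    rw [← hA m hm s1] at hU'
    exact ⟨c, U', hc, hU', by rw [← hqp, ← hq', ← hp']⟩
  apply le_antisymm
  · -- hard direction
    intro a ha
    obtain ⟨k, hak⟩ := mem_rrPow_iff.1 ha
    cases k with
    | zero =>
      have h1 : a ∈ I ^ (m + 1) := by
        have := hak 1 (by simp)
        rwa [mul_one] at this
      rw [hred m hm] at h1
      exact Ideal.mul_mono_right (pow_le_rrPow I m) h1
    | succ k0 =>
      have iter : ∀ t, t ≤ k0 → ∃ U D, a * x ^ (k0 - t) = U + y ^ (k0 + 2 - t) * D ∧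
          U ∈ I ^ (m + k0 + 1 - t) ∧ x ^ (t + 1) * D ∈ I ^ (m + t) := by
        intro t
        induction t with
        | zero =>
          intro _
          have hax : a * x ^ (k0 + 1) ∈ I ^ (m + (k0 + 1 + 1)) := by
            rw [show m + (k0 + 1 + 1) = m + 1 + (k0 + 1) by omega]
            exact hak _ (Ideal.pow_mem_pow hxI _)
          obtain ⟨c, U0, hc, hU0, hEq⟩ := hdecomp (k0 + 1) _ hax
          have h1 : x * (a * x ^ k0 - U0) = y ^ (k0 + 2) * c := by
            linear_combination hEq
          have hcx : c ∈ Ideal.span {x} :=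
            hy' (k0 + 2) c (Ideal.mem_span_singleton.2 ⟨_, h1.symm⟩)
          obtain ⟨D1, hD1⟩ := Ideal.mem_span_singleton.1 hcx
          have h2 : x * (a * x ^ k0) = x * (U0 + y ^ (k0 + 2) * D1) := by
            linear_combination hEq + y ^ (k0 + 2) * hD1
          have h3 := hcancel _ _ h2
          refine ⟨U0, D1, ?_, ?_, ?_⟩
          · rw [show k0 - 0 = k0 by omega, show k0 + 2 - 0 = k0 + 2 by omega]
            exact h3
          · rw [show m + k0 + 1 - 0 = m + (k0 + 1) by omega]
            exact hU0
          · rw [pow_one, ← hD1]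
            rw [show m + 0 = m by omega]
            exact hc
        | succ t ih =>
          intro ht
          obtain ⟨U, D, hEq, hU, hD⟩ := ih (by omega)
          obtain ⟨i2, rfl⟩ : ∃ i2, k0 = t + 1 + i2 := ⟨k0 - (t + 1), by omega⟩
          rw [show t + 1 + i2 - t = i2 + 1 by omega,
            show t + 1 + i2 + 2 - t = i2 + 3 by omega] at hEq
          have hU' : U ∈ I ^ (m + (i2 + 1 + 1)) := by
            rw [show m + (i2 + 1 + 1) = m + (t + 1 + i2) + 1 - t by omega]
            exact hU
          obtain ⟨c, U', hc, hU'', hUEq⟩ := hdecomp (i2 + 1) U hU'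
          have h1 : x * (a * x ^ i2 - U') = y ^ (i2 + 2) * (c + y * D) := by
            linear_combination hEq + hUEq
          have hmem : c + y * D ∈ Ideal.span {x} :=
            hy' (i2 + 2) _ (Ideal.mem_span_singleton.2 ⟨_, h1.symm⟩)
          obtain ⟨D', hD'⟩ := Ideal.mem_span_singleton.1 hmem
          have h2 : x * (a * x ^ i2) = x * (U' + y ^ (i2 + 2) * D') := by
            linear_combination h1 + y ^ (i2 + 2) * hD'
          have h3 := hcancel _ _ h2
          refine ⟨U', D', ?_, ?_, ?_⟩
          · rw [show t + 1 + i2 - (t + 1) = i2 by omega,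
              show t + 1 + i2 + 2 - (t + 1) = i2 + 2 by omega]
            exact h3
          · rw [show m + (t + 1 + i2) + 1 - (t + 1) = m + (i2 + 1) by omega]
            exact hU''
          · have h5 : x ^ (t + 1 + 1) * D' = x ^ (t + 1) * c + y * (x ^ (t + 1) * D) := by
              linear_combination (-(x ^ (t + 1))) * hD'
            rw [h5]
            exact add_mem (hmul (Ideal.pow_mem_pow hxI (t + 1)) hc (by omega))
              (hmul hyI1 hD (by omega))
      obtain ⟨U, D, hEq, hU, hD⟩ := iter k0 le_rfl
      rw [show k0 - k0 = 0 by omega, show k0 + 2 - k0 = 2 by omega, pow_zero, mul_one] at hEq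
      have hU1 : U ∈ I ^ (m + 1) := by
        rw [show m + 1 = m + k0 + 1 - k0 by omega]
        exact hU
      have hzx : (y * D) * x ^ (k0 + 1 + 1) ∈ I ^ (m + (k0 + 1 + 1)) := by
        rw [show (y * D) * x ^ (k0 + 1 + 1) = y * (x * (x ^ (k0 + 1) * D)) by ring]
        exact hmul hyI1 (hmul hxI1 hD rfl) (by omega)
      have hzy : (y * D) * y ^ (k0 + 1 + 1) ∈ I ^ (m + (k0 + 1 + 1)) := by
        have h4 : (y * D) * y ^ (k0 + 1 + 1) = y ^ (k0 + 1) * (a - U) := by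
          linear_combination (-(y ^ (k0 + 1))) * hEq
        rw [h4, mul_sub]
        refine sub_mem ?_ ?_
        · have := hak (y ^ (k0 + 1)) (Ideal.pow_mem_pow hyI (k0 + 1))
          rw [show m + (k0 + 1 + 1) = m + 1 + (k0 + 1) by omega, mul_comm]
          exact this
        · exact hmul (Ideal.pow_mem_pow hyI (k0 + 1)) hU1 (by omega)
      have hz : y * D ∈ rrPow I m := hB (y * D) (k0 + 1) hzx hzy
      rw [hEq]
      refine add_mem ?_ ?_
      · have hU2 : U ∈ J * I ^ m := by rw [← hred m hm]; exact hU1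
        exact Ideal.mul_mono_right (pow_le_rrPow I m) hU2
      · rw [show y ^ 2 * D = y * (y * D) by ring]
        exact Ideal.mul_mem_mul (by rw [hJ]; exact Ideal.subset_span (by simp)) hz
  · -- easy direction
    rw [Ideal.mul_le]
    intro j hj u hu
    obtain ⟨k, hk⟩ := mem_rrPow_iff.1 hu
    refine mem_rrPow_iff.2 ⟨k, fun v hv => ?_⟩
    rw [show j * u * v = u * v * j by ring, show m + 1 + k = (m + k) + 1 by omega, pow_succ]
    exact Ideal.mul_mem_mul (hk v hv) (hJI hj)
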